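/- (Optimal baseline) Let b*_t(s,a) = q_{π,t}(s,a). For every baseline function b, every time t, and every state s: Var( G^{b*}(τ^{μ^{*,b*}}_{t:T−1}) | S_t = s ) ≤ Var( G^b(τ^{μ^{*,b}}_{t:T−1}) | S_t = s ), where μ^{*,c} denotes the optimal behavior policy tailored to baseline c. -/

import Mathlib

open Finset

namespace DOpt

variable {S A : Type}

/-- A time-indexed policy: for each time step and state, a probability distribution on actions. -/
def IsPolicy [Fintype A] (μ : ℕ → S → A → ℝ) : Prop :=
  ∀ t s, (∀ a, 0 ≤ μ t s a) ∧ ∑ a, μ t s a = 1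

/-- A transition probability kernel on the finite state space. -/
def IsKernel [Fintype S] (p : S → A → S → ℝ) : Prop :=
  ∀ s a, (∀ s', 0 ≤ p s a s') ∧ ∑ s', p s a s' = 1

/-- Action value `q_{π,t}(s,a)` computed with `n` remaining transitions after time `t`
(`n = T - 1 - t` in a horizon-`T` MDP). -/
noncomputable def qval [Fintype S] [Fintype A] (p : S → A → S → ℝ) (π : ℕ → S → A → ℝ)
    (r : S → A → ℝ) : ℕ → ℕ → S → A → ℝ
  | 0, _, s, a => r s a
  | n + 1, t, s, a =>
      r s a + ∑ s', p s a s' * ∑ a', π (t + 1) s' a' * qval p π r n (t + 1) s' a'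

/-- `q_{π,t}(s,a)` in the horizon-`T` MDP. -/
noncomputable def qf [Fintype S] [Fintype A] (T : ℕ) (p : S → A → S → ℝ)
    (π : ℕ → S → A → ℝ) (r : S → A → ℝ) (t : ℕ) (s : S) (a : A) : ℝ :=
  qval p π r (T - 1 - t) t s a

/-- `v_{π,t}(s) = Σ_a π_t(a|s) q_{π,t}(s,a)`. -/
noncomputable def vf [Fintype S] [Fintype A] (T : ℕ) (p : S → A → S → ℝ)
    (π : ℕ → S → A → ℝ) (r : S → A → ℝ) (t : ℕ) (s : S) : ℝ :=
  ∑ a, π t s a * qf T p π r t s a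

/-- `ν_{π,t}(s,a) = Var_{s' ∼ p(·|s,a)}(v_{π,t+1}(s'))` for `t ≤ T-2`, and `0` at `t = T-1`. -/
noncomputable def nuf [Fintype S] [Fintype A] (T : ℕ) (p : S → A → S → ℝ)
    (π : ℕ → S → A → ℝ) (r : S → A → ℝ) (t : ℕ) (s : S) (a : A) : ℝ :=
  if t + 2 ≤ T then
    (∑ s', p s a s' * (vf T p π r (t + 1) s') ^ 2) -
      (∑ s', p s a s' * vf T p π r (t + 1) s') ^ 2
  else 0

/-- Trajectories with `n` further transitions after the first action:
`(a_t, s_{t+1}, a_{t+1}, …, s_{t+n}, a_{t+n})`. -/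
def Traj (S A : Type) : ℕ → Type
  | 0 => A
  | n + 1 => A × S × Traj S A n

/-- Expectation, over trajectories generated by the behavior policy `μ` starting at time `t`
in state `s` with `n` further transitions, of a function `f` of the trajectory. -/
noncomputable def Exp [Fintype S] [Fintype A] (p : S → A → S → ℝ) (μ : ℕ → S → A → ℝ) :
    (n : ℕ) → ℕ → S → (Traj S A n → ℝ) → ℝ
  | 0, t, s, f => ∑ a, μ t s a * f a
  | n + 1, t, s, f =>
      ∑ a, μ t s a * ∑ s', p s a s' * Exp p μ n (t + 1) s' (fun τ => f (a, s', τ))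

/-- Conditional variance of a function of the trajectory, given `S_t = s`. -/
noncomputable def Var [Fintype S] [Fintype A] (p : S → A → S → ℝ) (μ : ℕ → S → A → ℝ)
    (n : ℕ) (t : ℕ) (s : S) (f : Traj S A n → ℝ) : ℝ :=
  Exp p μ n t s (fun τ => (f τ) ^ 2) - (Exp p μ n t s f) ^ 2

/-- `b̄_t(s) = Σ_a π_t(a|s) b_t(s,a)`. -/
noncomputable def bbar [Fintype A] (π : ℕ → S → A → ℝ) (b : ℕ → S → A → ℝ)
    (t : ℕ) (s : S) : ℝ :=
  ∑ a, π t s a * b t s a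

/-- The per-decision importance-sampling estimator `G^b` with baseline `b`, target policy `π`
and behavior policy `μ`, as a function of the trajectory from time `t` (with `n` further
transitions, `n = T - 1 - t`). -/
noncomputable def Gest [Fintype S] [Fintype A] (π μ : ℕ → S → A → ℝ) (r : S → A → ℝ)
    (b : ℕ → S → A → ℝ) : (n : ℕ) → ℕ → S → Traj S A n → ℝ
  | 0, t, s, a => (π t s a / μ t s a) * (r s a - b t s a) + bbar π b t s
  | n + 1, t, s, (a, s', τ) =>
      (π t s a / μ t s a) * (r s a + Gest π μ r b n (t + 1) s' τ - b t s a) + bbar π b t s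

/-- Normalization of a weight vector into a probability distribution; the uniform distribution
when the total weight vanishes. -/
noncomputable def normPol [Fintype A] (w : A → ℝ) (a : A) : ℝ :=
  if (∑ a', w a') = 0 then ((Fintype.card A : ℝ))⁻¹ else w a / ∑ a', w a'

/-- `u_{π,t}(s,a)` (with baseline `b`), defined backwards in time together with the optimal
behavior policy `μ*`; the first argument is the number `n = T - 1 - t` of remaining
transitions after time `t`. -/
noncomputable def uAux [Fintype S] [Fintype A] (T : ℕ) (p : S → A → S → ℝ)
    (π : ℕ → S → A → ℝ) (r : S → A → ℝ) (b : ℕ → S → A → ℝ) :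
    ℕ → ℕ → S → A → ℝ
  | 0, t, s, a => (qf T p π r t s a - b t s a) ^ 2
  | n + 1, t, s, a =>
      (qf T p π r t s a - b t s a) ^ 2 + nuf T p π r t s a +
        ∑ s', p s a s' *
          Var p
            (fun t' s₁ a₁ => normPol (fun a₂ =>
              π t' s₁ a₂ * Real.sqrt (uAux T p π r b (n - (t' - (t + 1))) t' s₁ a₂)) a₁)
            n (t + 1) s'
            (Gest π
              (fun t' s₁ a₁ => normPol (fun a₂ =>
                π t' s₁ a₂ * Real.sqrt (uAux T p π r b (n - (t' - (t + 1))) t' s₁ a₂)) a₁)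
              r b n (t + 1) s')
  termination_by n => n
  decreasing_by all_goals omega

/-- `u_{π,t}(s,a)` in the horizon-`T` MDP, with baseline `b`. -/
noncomputable def uf [Fintype S] [Fintype A] (T : ℕ) (p : S → A → S → ℝ)
    (π : ℕ → S → A → ℝ) (r : S → A → ℝ) (b : ℕ → S → A → ℝ) (t : ℕ) (s : S) (a : A) : ℝ :=
  uAux T p π r b (T - 1 - t) t s a

/-- The optimal behavior policy `μ*_t(a|s) ∝ π_t(a|s) √(u_{π,t}(s,a))` tailored to the
baseline `b` (uniform when all the weights vanish). -/
noncomputable def mustar [Fintype S] [Fintype A] (T : ℕ) (p : S → A → S → ℝ)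
    (π : ℕ → S → A → ℝ) (r : S → A → ℝ) (b : ℕ → S → A → ℝ) (t : ℕ) (s : S) (a : A) : ℝ :=
  normPol (fun a' => π t s a' * Real.sqrt (uf T p π r b t s a')) a

/-- Conditional expectation `E[G^b(τ^μ_{t:T-1}) | S_t = s]`. -/
noncomputable def ExpG [Fintype S] [Fintype A] (T : ℕ) (p : S → A → S → ℝ)
    (π μ : ℕ → S → A → ℝ) (r : S → A → ℝ) (b : ℕ → S → A → ℝ) (t : ℕ) (s : S) : ℝ :=
  Exp p μ (T - 1 - t) t s (Gest π μ r b (T - 1 - t) t s)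

/-- Conditional variance `Var(G^b(τ^μ_{t:T-1}) | S_t = s)`. -/
noncomputable def VarG [Fintype S] [Fintype A] (T : ℕ) (p : S → A → S → ℝ)
    (π μ : ℕ → S → A → ℝ) (r : S → A → ℝ) (b : ℕ → S → A → ℝ) (t : ℕ) (s : S) : ℝ :=
  Var p μ (T - 1 - t) t s (Gest π μ r b (T - 1 - t) t s)

/-- Membership in the enlarged policy-search space
`Λ = {μ : ∀ t,s,a, μ_t(a|s) = 0 → π_t(a|s)·u_{π,t}(s,a) = 0}`. -/
def inLambda [Fintype S] [Fintype A] (T : ℕ) (p : S → A → S → ℝ)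
    (π : ℕ → S → A → ℝ) (r : S → A → ℝ) (b : ℕ → S → A → ℝ) (μ : ℕ → S → A → ℝ) : Prop :=
  ∀ t s a, t < T → μ t s a = 0 → π t s a * uf T p π r b t s a = 0


/-- The optimal baseline `b*_t(s,a) = q_{π,t}(s,a)`. -/
noncomputable def bstar [Fintype S] [Fintype A] (T : ℕ) (p : S → A → S → ℝ)
    (π : ℕ → S → A → ℝ) (r : S → A → ℝ) : ℕ → S → A → ℝ :=
  fun t s a => qf T p π r t s a

/-- The zero baseline: with it, `Gest` is the plain PDIS estimator `G^{PDIS}`. -/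
def zerob : ℕ → S → A → ℝ := fun _ _ _ => 0


section Aux

set_option linter.unusedSectionVars false
set_option linter.deprecated false

variable {S A : Type} [Fintype S] [Fintype A] [Nonempty A]

private lemma cs2 (x1 x2 y1 y2 : ℝ) :
    x1 * y1 + x2 * y2 ≤ Real.sqrt (x1 ^ 2 + x2 ^ 2) * Real.sqrt (y1 ^ 2 + y2 ^ 2) := by
  have h3 : (x1 * y1 + x2 * y2) ^ 2 ≤ (x1 ^ 2 + x2 ^ 2) * (y1 ^ 2 + y2 ^ 2) := by
    nlinarith [sq_nonneg (x1 * y2 - x2 * y1)]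
  calc x1 * y1 + x2 * y2 ≤ |x1 * y1 + x2 * y2| := le_abs_self _
    _ = Real.sqrt ((x1 * y1 + x2 * y2) ^ 2) := (Real.sqrt_sq_eq_abs _).symm
    _ ≤ Real.sqrt ((x1 ^ 2 + x2 ^ 2) * (y1 ^ 2 + y2 ^ 2)) := Real.sqrt_le_sqrt h3
    _ = _ := Real.sqrt_mul (by positivity) _

private lemma sum_sqrt_two (f g : A → ℝ) (hg : ∀ a, 0 ≤ g a) :
    Real.sqrt ((∑ a, f a) ^ 2 + (∑ a, Real.sqrt (g a)) ^ 2) ≤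
      ∑ a, Real.sqrt ((f a) ^ 2 + g a) := by
  set F := ∑ a, f a with hF
  set G := ∑ a, Real.sqrt (g a) with hG
  set H := ∑ a, Real.sqrt ((f a) ^ 2 + g a) with hH
  have hHnn : 0 ≤ H := Finset.sum_nonneg fun a _ => Real.sqrt_nonneg _
  set R := Real.sqrt (F ^ 2 + G ^ 2) with hR
  have hRnn : 0 ≤ R := Real.sqrt_nonneg _
  have hRsq : R * R = F ^ 2 + G ^ 2 := Real.mul_self_sqrt (by positivity)
  have key : F ^ 2 + G ^ 2 ≤ H * R := by
    have e1 : F ^ 2 + G ^ 2 = ∑ a, (f a * F + Real.sqrt (g a) * G) := by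
      rw [Finset.sum_add_distrib, ← Finset.sum_mul, ← Finset.sum_mul, ← hF, ← hG]; ring
    have e2 : ∀ a : A, f a * F + Real.sqrt (g a) * G ≤ Real.sqrt ((f a) ^ 2 + g a) * R := by
      intro a
      have := cs2 (f a) (Real.sqrt (g a)) F G
      rwa [Real.sq_sqrt (hg a)] at this
    calc F ^ 2 + G ^ 2 = ∑ a, (f a * F + Real.sqrt (g a) * G) := e1
      _ ≤ ∑ a, Real.sqrt ((f a) ^ 2 + g a) * R := Finset.sum_le_sum fun a _ => e2 a
      _ = H * R := by rw [← Finset.sum_mul]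
  rcases eq_or_lt_of_le hRnn with h | h
  · rw [← h]; exact hHnn
  · have : R * R ≤ H * R := by rw [hRsq]; exact key
    exact le_of_mul_le_mul_right this h

private lemma final_ineq (w d m ms : A → ℝ) (hw : ∀ a, 0 ≤ w a)
    (hms : ∀ a, 0 ≤ ms a) (hmm : ∀ a, ms a ≤ m a) :
    (∑ a, w a * Real.sqrt (ms a)) ^ 2 ≤
      (∑ a, w a * Real.sqrt ((d a) ^ 2 + m a)) ^ 2 - (∑ a, w a * d a) ^ 2 := by
  have hfg : ∀ a, Real.sqrt ((w a * d a) ^ 2 + (w a) ^ 2 * ms a)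
      = w a * Real.sqrt ((d a) ^ 2 + ms a) := by
    intro a
    rw [show (w a * d a) ^ 2 + (w a) ^ 2 * ms a = (w a) ^ 2 * ((d a) ^ 2 + ms a) by ring,
      Real.sqrt_mul (sq_nonneg _), Real.sqrt_sq (hw a)]
  have hg2 : ∀ a, Real.sqrt ((w a) ^ 2 * ms a) = w a * Real.sqrt (ms a) := by
    intro a
    rw [Real.sqrt_mul (sq_nonneg _), Real.sqrt_sq (hw a)]
  have h1 := sum_sqrt_two (fun a => w a * d a) (fun a => (w a) ^ 2 * ms a)
    (fun a => mul_nonneg (sq_nonneg _) (hms a))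
  simp only [hfg, hg2] at h1
  have h2 : (∑ a, w a * Real.sqrt ((d a) ^ 2 + ms a)) ≤
      ∑ a, w a * Real.sqrt ((d a) ^ 2 + m a) := by
    refine Finset.sum_le_sum fun a _ => ?_
    exact mul_le_mul_of_nonneg_left (Real.sqrt_le_sqrt (by nlinarith [hmm a])) (hw a)
  have h3 : Real.sqrt ((∑ a, w a * d a) ^ 2 + (∑ a, w a * Real.sqrt (ms a)) ^ 2) ≤
      ∑ a, w a * Real.sqrt ((d a) ^ 2 + m a) := le_trans h1 h2
  have h4 : (∑ a, w a * d a) ^ 2 + (∑ a, w a * Real.sqrt (ms a)) ^ 2 ≤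
      (∑ a, w a * Real.sqrt ((d a) ^ 2 + m a)) ^ 2 := by
    have := pow_le_pow_left₀ (Real.sqrt_nonneg _) h3 2
    rwa [Real.sq_sqrt (by positivity)] at this
  linarith

private lemma jensen_step {ι : Type} [Fintype ι] (w x : ι → ℝ) (h0 : ∀ i, 0 ≤ w i)
    (h1 : ∑ i, w i = 1) : (∑ i, w i * x i) ^ 2 ≤ ∑ i, w i * (x i) ^ 2 := by
  have e1 : ∀ i : ι, w i * x i = Real.sqrt (w i) * (Real.sqrt (w i) * x i) := fun i => by
    rw [← mul_assoc, Real.mul_self_sqrt (h0 i)]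
  have e2 : ∀ i : ι, (Real.sqrt (w i)) ^ 2 = w i := fun i => Real.sq_sqrt (h0 i)
  have e3 : ∀ i : ι, (Real.sqrt (w i) * x i) ^ 2 = w i * (x i) ^ 2 := fun i => by
    rw [mul_pow, e2]
  calc (∑ i, w i * x i) ^ 2
      = (∑ i, Real.sqrt (w i) * (Real.sqrt (w i) * x i)) ^ 2 := by
        rw [Finset.sum_congr rfl fun i _ => e1 i]
    _ ≤ (∑ i, (Real.sqrt (w i)) ^ 2) * ∑ i, (Real.sqrt (w i) * x i) ^ 2 :=
        Finset.sum_mul_sq_le_sq_mul_sq _ _ _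
    _ = ∑ i, w i * (x i) ^ 2 := by
        rw [Finset.sum_congr rfl fun i _ => e2 i, Finset.sum_congr rfl fun i _ => e3 i, h1,
          one_mul]

private lemma normPol_nonneg (w : A → ℝ) (hw : ∀ a, 0 ≤ w a) (a : A) : 0 ≤ normPol w a := by
  unfold normPol
  by_cases h : (∑ a', w a') = 0
  · simp [h]
  · simp only [h, if_false]
    have hs : 0 ≤ ∑ a', w a' := Finset.sum_nonneg fun a' _ => hw a'
    exact div_nonneg (hw a) hs

private lemma normPol_sum (w : A → ℝ) : ∑ a, normPol w a = 1 := by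
  unfold normPol
  by_cases h : (∑ a', w a') = 0
  · simp only [h, if_true]
    rw [Finset.sum_const, nsmul_eq_mul, Finset.card_univ]
    rw [mul_inv_cancel₀]
    exact_mod_cast Fintype.card_ne_zero
  · simp only [h, if_false]
    rw [← Finset.sum_div, div_self h]

private lemma mustar_isPolicy (T : ℕ) (p : S → A → S → ℝ) (π : ℕ → S → A → ℝ)
    (r : S → A → ℝ) (c : ℕ → S → A → ℝ) (hπ : IsPolicy π) :
    IsPolicy (mustar T p π r c) := by
  intro t s
  constructor
  · intro a
    exact normPol_nonneg _ (fun a' => mul_nonneg ((hπ t s).1 a') (Real.sqrt_nonneg _)) a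
  · exact normPol_sum _

private lemma Exp_add (p : S → A → S → ℝ) (μ : ℕ → S → A → ℝ) :
    ∀ (n : ℕ) (t : ℕ) (s : S) (f g : Traj S A n → ℝ),
      Exp p μ n t s (fun τ => f τ + g τ) = Exp p μ n t s f + Exp p μ n t s g := by
  intro n
  induction n with
  | zero =>
    intro t s f g
    simp only [Exp, mul_add, Finset.sum_add_distrib]
  | succ n ih =>
    intro t s f g
    simp only [Exp]
    rw [← Finset.sum_add_distrib]
    refine Finset.sum_congr rfl fun a _ => ?_
    rw [← mul_add, ← Finset.sum_add_distrib]
    congr 1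
    refine Finset.sum_congr rfl fun s' _ => ?_
    rw [← mul_add, ih]

private lemma Exp_smul (p : S → A → S → ℝ) (μ : ℕ → S → A → ℝ) :
    ∀ (n : ℕ) (t : ℕ) (s : S) (α : ℝ) (f : Traj S A n → ℝ),
      Exp p μ n t s (fun τ => α * f τ) = α * Exp p μ n t s f := by
  intro n
  induction n with
  | zero =>
    intro t s α f
    simp only [Exp, Finset.mul_sum]
    exact Finset.sum_congr rfl fun a _ => by ring
  | succ n ih =>
    intro t s α f
    simp only [Exp, ih]
    have h1 : ∀ a : A, (∑ s', p s a s' * (α * Exp p μ n (t + 1) s' fun τ => f (a, s', τ)))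
        = α * ∑ s', p s a s' * Exp p μ n (t + 1) s' fun τ => f (a, s', τ) := by
      intro a
      rw [Finset.mul_sum]
      exact Finset.sum_congr rfl fun s' _ => by ring
    simp only [h1]
    rw [Finset.mul_sum]
    exact Finset.sum_congr rfl fun a _ => by ring

private lemma Exp_const (p : S → A → S → ℝ) (μ : ℕ → S → A → ℝ) (hp : IsKernel p)
    (hμ : IsPolicy μ) :
    ∀ (n : ℕ) (t : ℕ) (s : S) (β : ℝ), Exp p μ n t s (fun _ => β) = β := by
  intro n
  induction n with
  | zero =>
    intro t s β
    simp only [Exp, ← Finset.sum_mul, (hμ t s).2, one_mul]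
  | succ n ih =>
    intro t s β
    simp only [Exp]
    have : ∀ a : A, (∑ s', p s a s' * Exp p μ n (t + 1) s' fun _ => β) = β := by
      intro a
      have : ∀ s' : S, p s a s' * Exp p μ n (t + 1) s' (fun _ => β) = p s a s' * β := by
        intro s'; rw [ih]
      rw [Finset.sum_congr rfl fun s' _ => this s', ← Finset.sum_mul, (hp s a).2, one_mul]
    rw [Finset.sum_congr rfl fun a _ => by rw [this a], ← Finset.sum_mul, (hμ t s).2, one_mul]

private lemma Exp_affine (p : S → A → S → ℝ) (μ : ℕ → S → A → ℝ) (hp : IsKernel p)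
    (hμ : IsPolicy μ) (n : ℕ) (t : ℕ) (s : S) (α β : ℝ) (f : Traj S A n → ℝ) :
    Exp p μ n t s (fun τ => α * f τ + β) = α * Exp p μ n t s f + β := by
  rw [Exp_add p μ n t s (fun τ => α * f τ) (fun _ => β), Exp_smul, Exp_const p μ hp hμ]

private lemma Exp_congr (p : S → A → S → ℝ) (μ μ' : ℕ → S → A → ℝ) :
    ∀ (n : ℕ) (t : ℕ), (∀ k, k ≤ n → μ (t + k) = μ' (t + k)) →
      ∀ (s : S) (f : Traj S A n → ℝ), Exp p μ n t s f = Exp p μ' n t s f := by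
  intro n
  induction n with
  | zero =>
    intro t h s f
    have h0 : μ t = μ' t := by simpa using h 0 le_rfl
    simp only [Exp, h0]
  | succ n ih =>
    intro t h s f
    have h0 : μ t = μ' t := by simpa using h 0 (Nat.zero_le _)
    simp only [Exp, h0]
    refine Finset.sum_congr rfl fun a _ => ?_
    congr 1
    refine Finset.sum_congr rfl fun s' _ => ?_
    congr 1
    refine ih (t + 1) (fun k hk => ?_) s' _
    rw [show t + 1 + k = t + (k + 1) by omega]
    exact h (k + 1) (by omega)

private lemma Gest_congr (π : ℕ → S → A → ℝ) (μ μ' : ℕ → S → A → ℝ) (r : S → A → ℝ)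
    (c : ℕ → S → A → ℝ) :
    ∀ (n : ℕ) (t : ℕ), (∀ k, k ≤ n → μ (t + k) = μ' (t + k)) →
      ∀ (s : S) (τ : Traj S A n), Gest π μ r c n t s τ = Gest π μ' r c n t s τ := by
  intro n
  induction n with
  | zero =>
    intro t h s τ
    have h0 : μ t = μ' t := by simpa using h 0 le_rfl
    simp only [Gest, h0]
  | succ n ih =>
    intro t h s τ
    obtain ⟨a, s', τ⟩ := τ
    have h0 : μ t = μ' t := by simpa using h 0 (Nat.zero_le _)
    simp only [Gest, h0]
    rw [ih (t + 1) (fun k hk => by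
      rw [show t + 1 + k = t + (k + 1) by omega]
      exact h (k + 1) (by omega)) s' τ]

private lemma Exp_sq (p : S → A → S → ℝ) (μ : ℕ → S → A → ℝ) (hp : IsKernel p)
    (hμ : IsPolicy μ) :
    ∀ (n : ℕ) (t : ℕ) (s : S) (f : Traj S A n → ℝ),
      (Exp p μ n t s f) ^ 2 ≤ Exp p μ n t s (fun τ => (f τ) ^ 2) := by
  intro n
  induction n with
  | zero =>
    intro t s f
    exact jensen_step (μ t s) f (hμ t s).1 (hμ t s).2
  | succ n ih =>
    intro t s f
    show (∑ a, μ t s a * ∑ s', p s a s' * Exp p μ n (t + 1) s' (fun τ => f (a, s', τ))) ^ 2 ≤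
      ∑ a, μ t s a * ∑ s', p s a s' * Exp p μ n (t + 1) s' (fun τ => (f (a, s', τ)) ^ 2)
    calc (∑ a, μ t s a * ∑ s', p s a s' * Exp p μ n (t + 1) s' (fun τ => f (a, s', τ))) ^ 2
        ≤ ∑ a, μ t s a * (∑ s', p s a s' * Exp p μ n (t + 1) s' (fun τ => f (a, s', τ))) ^ 2 :=
          jensen_step (μ t s) _ (hμ t s).1 (hμ t s).2
      _ ≤ ∑ a, μ t s a * ∑ s', p s a s' * Exp p μ n (t + 1) s' (fun τ => (f (a, s', τ)) ^ 2) := by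
          refine Finset.sum_le_sum fun a _ => ?_
          refine mul_le_mul_of_nonneg_left ?_ ((hμ t s).1 a)
          calc (∑ s', p s a s' * Exp p μ n (t + 1) s' (fun τ => f (a, s', τ))) ^ 2
              ≤ ∑ s', p s a s' * (Exp p μ n (t + 1) s' (fun τ => f (a, s', τ))) ^ 2 :=
                jensen_step (p s a) _ (hp s a).1 (hp s a).2
            _ ≤ ∑ s', p s a s' * Exp p μ n (t + 1) s' (fun τ => (f (a, s', τ)) ^ 2) := by
                refine Finset.sum_le_sum fun s' _ => ?_
                exact mul_le_mul_of_nonneg_left (ih (t + 1) s' _) ((hp s a).1 s')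

private lemma Var_nonneg (p : S → A → S → ℝ) (μ : ℕ → S → A → ℝ) (hp : IsKernel p)
    (hμ : IsPolicy μ) (n t : ℕ) (s : S) (f : Traj S A n → ℝ) : 0 ≤ Var p μ n t s f :=
  sub_nonneg.2 (Exp_sq p μ hp hμ n t s f)


private lemma uAux_zero (T : ℕ) (p : S → A → S → ℝ) (π : ℕ → S → A → ℝ) (r : S → A → ℝ)
    (c : ℕ → S → A → ℝ) (t : ℕ) (s : S) (a : A) :
    uAux T p π r c 0 t s a = (qf T p π r t s a - c t s a) ^ 2 := by
  rw [uAux]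

private lemma uAux_succ (T : ℕ) (p : S → A → S → ℝ) (π : ℕ → S → A → ℝ) (r : S → A → ℝ)
    (c : ℕ → S → A → ℝ) (n t : ℕ) (s : S) (a : A) :
    uAux T p π r c (n + 1) t s a =
      (qf T p π r t s a - c t s a) ^ 2 + nuf T p π r t s a +
        ∑ s', p s a s' *
          Var p
            (fun t' s₁ a₁ => normPol (fun a₂ =>
              π t' s₁ a₂ * Real.sqrt (uAux T p π r c (n - (t' - (t + 1))) t' s₁ a₂)) a₁)
            n (t + 1) s'
            (Gest π
              (fun t' s₁ a₁ => normPol (fun a₂ =>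
                π t' s₁ a₂ * Real.sqrt (uAux T p π r c (n - (t' - (t + 1))) t' s₁ a₂)) a₁)
              r c n (t + 1) s') := by
  rw [uAux]

private lemma normPol_policy (π : ℕ → S → A → ℝ) (hπ : IsPolicy π) (u' : ℕ → S → A → ℝ) :
    IsPolicy (fun t' s a => normPol (fun a' => π t' s a' * Real.sqrt (u' t' s a')) a) := by
  intro t s
  exact ⟨normPol_nonneg _ (fun a' => mul_nonneg ((hπ t s).1 a') (Real.sqrt_nonneg _)),
    normPol_sum _⟩

private lemma nuf_nonneg (T : ℕ) (p : S → A → S → ℝ) (π : ℕ → S → A → ℝ) (r : S → A → ℝ)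
    (hp : IsKernel p) (t : ℕ) (s : S) (a : A) : 0 ≤ nuf T p π r t s a := by
  unfold nuf
  split
  · exact sub_nonneg.2 (jensen_step (p s a) _ (hp s a).1 (hp s a).2)
  · exact le_refl 0

private lemma sq_le_uAux (T : ℕ) (p : S → A → S → ℝ) (π : ℕ → S → A → ℝ) (r : S → A → ℝ)
    (c : ℕ → S → A → ℝ) (hp : IsKernel p) (hπ : IsPolicy π) (n t : ℕ) (s : S) (a : A) :
    (qf T p π r t s a - c t s a) ^ 2 ≤ uAux T p π r c n t s a := by
  cases n with
  | zero => rw [uAux_zero]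
  | succ n =>
    rw [uAux_succ]
    have h1 := nuf_nonneg T p π r hp t s a
    have h2 : 0 ≤ ∑ s', p s a s' *
        Var p
          (fun t' s₁ a₁ => normPol (fun a₂ =>
            π t' s₁ a₂ * Real.sqrt (uAux T p π r c (n - (t' - (t + 1))) t' s₁ a₂)) a₁)
          n (t + 1) s'
          (Gest π
            (fun t' s₁ a₁ => normPol (fun a₂ =>
              π t' s₁ a₂ * Real.sqrt (uAux T p π r c (n - (t' - (t + 1))) t' s₁ a₂)) a₁)
            r c n (t + 1) s') := by
      refine Finset.sum_nonneg fun s' _ => mul_nonneg ((hp s a).1 s') ?_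
      exact Var_nonneg p _ hp (normPol_policy π hπ _) n (t + 1) s' _
    linarith

private lemma sq_le_uf (T : ℕ) (p : S → A → S → ℝ) (π : ℕ → S → A → ℝ) (r : S → A → ℝ)
    (c : ℕ → S → A → ℝ) (hp : IsKernel p) (hπ : IsPolicy π) (t : ℕ) (s : S) (a : A) :
    (qf T p π r t s a - c t s a) ^ 2 ≤ uf T p π r c t s a :=
  sq_le_uAux T p π r c hp hπ _ t s a

private lemma uf_nonneg (T : ℕ) (p : S → A → S → ℝ) (π : ℕ → S → A → ℝ) (r : S → A → ℝ)
    (c : ℕ → S → A → ℝ) (hp : IsKernel p) (hπ : IsPolicy π) (t : ℕ) (s : S) (a : A) :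
    0 ≤ uf T p π r c t s a :=
  le_trans (sq_nonneg _) (sq_le_uf T p π r c hp hπ t s a)

private lemma mustar_supp (T : ℕ) (p : S → A → S → ℝ) (π : ℕ → S → A → ℝ) (r : S → A → ℝ)
    (c : ℕ → S → A → ℝ) (hp : IsKernel p) (hπ : IsPolicy π) (t : ℕ) (s : S) (a : A)
    (h : mustar T p π r c t s a = 0) :
    π t s a * (qf T p π r t s a - c t s a) = 0 := by
  unfold mustar normPol at h
  by_cases hz : (∑ a', π t s a' * Real.sqrt (uf T p π r c t s a')) = 0
  · rw [if_pos hz] at h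
    exfalso
    have : (Fintype.card A : ℝ) ≠ 0 := by exact_mod_cast Fintype.card_ne_zero
    exact (inv_ne_zero this) h
  · rw [if_neg hz] at h
    have hw : π t s a * Real.sqrt (uf T p π r c t s a) = 0 := by
      rcases div_eq_zero_iff.1 h with h' | h'
      · exact h'
      · exact absurd h' hz
    rcases mul_eq_zero.1 hw with h' | h'
    · rw [h', zero_mul]
    · have hle : uf T p π r c t s a ≤ 0 := Real.sqrt_eq_zero'.1 h'
      have hsq : (qf T p π r t s a - c t s a) ^ 2 = 0 :=
        le_antisymm (le_trans (sq_le_uf T p π r c hp hπ t s a) hle) (by positivity)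
      have : qf T p π r t s a - c t s a = 0 := by
        exact pow_eq_zero_iff (two_ne_zero) |>.1 hsq
      rw [this, mul_zero]

private lemma VarGest_congr (p : S → A → S → ℝ) (π μ μ' : ℕ → S → A → ℝ) (r : S → A → ℝ)
    (c : ℕ → S → A → ℝ) (n t : ℕ) (h : ∀ k, k ≤ n → μ (t + k) = μ' (t + k)) (s : S) :
    Var p μ n t s (Gest π μ r c n t s) = Var p μ' n t s (Gest π μ' r c n t s) := by
  have hG : Gest π μ r c n t s = Gest π μ' r c n t s :=
    funext fun τ => Gest_congr π μ μ' r c n t h s τ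
  unfold Var
  rw [hG, Exp_congr p μ μ' n t h, Exp_congr p μ μ' n t h]

private lemma Gest_mean (p : S → A → S → ℝ) (π μ : ℕ → S → A → ℝ) (r : S → A → ℝ)
    (c : ℕ → S → A → ℝ) (hp : IsKernel p) (hμ : IsPolicy μ) :
    ∀ (n t : ℕ),
      (∀ k s' a', k ≤ n → μ (t + k) s' a' = 0 →
        π (t + k) s' a' * (qval p π r (n - k) (t + k) s' a' - c (t + k) s' a') = 0) →
      ∀ s, Exp p μ n t s (Gest π μ r c n t s) = ∑ a, π t s a * qval p π r n t s a := by
  intro n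
  induction n with
  | zero =>
    intro t Hsupp s
    show ∑ a, μ t s a * ((π t s a / μ t s a) * (r s a - c t s a) + bbar π c t s) = _
    have step : ∀ a : A, μ t s a * ((π t s a / μ t s a) * (r s a - c t s a) + bbar π c t s)
        = π t s a * (r s a - c t s a) + μ t s a * bbar π c t s := by
      intro a
      by_cases h : μ t s a = 0
      · have h2 := Hsupp 0 s a (le_refl 0) (by simpa using h)
        simp only [Nat.add_zero, Nat.sub_zero] at h2
        have h3 : π t s a * (r s a - c t s a) = 0 := by simpa [qval] using h2
        rw [h, h3]; ring
      · field_simp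
        try ring
    rw [Finset.sum_congr rfl fun a _ => step a, Finset.sum_add_distrib, ← Finset.sum_mul,
      (hμ t s).2, one_mul]
    simp only [qval, mul_sub, Finset.sum_sub_distrib]
    unfold bbar
    ring
  | succ n ih =>
    intro t Hsupp s
    have Hsupp' : ∀ k s' a', k ≤ n → μ (t + 1 + k) s' a' = 0 →
        π (t + 1 + k) s' a' * (qval p π r (n - k) (t + 1 + k) s' a' - c (t + 1 + k) s' a') = 0 := by
      intro k s' a' hk h
      have h' := Hsupp (k + 1) s' a' (by omega)
        (by rw [show t + (k + 1) = t + 1 + k by omega]; exact h)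
      rw [show t + (k + 1) = t + 1 + k by omega] at h'
      simpa [Nat.succ_sub_succ] using h'
    have hmean' := ih (t + 1) Hsupp'
    show ∑ a, μ t s a * ∑ s', p s a s' * Exp p μ n (t + 1) s'
        (fun τ => (π t s a / μ t s a) * (r s a + Gest π μ r c n (t + 1) s' τ - c t s a)
          + bbar π c t s) = _
    have inner : ∀ (a : A) (s' : S), Exp p μ n (t + 1) s'
        (fun τ => (π t s a / μ t s a) * (r s a + Gest π μ r c n (t + 1) s' τ - c t s a)
          + bbar π c t s)
        = (π t s a / μ t s a) *
            (r s a + (∑ a', π (t + 1) s' a' * qval p π r n (t + 1) s' a') - c t s a)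
          + bbar π c t s := by
      intro a s'
      have e : (fun τ => (π t s a / μ t s a) *
            (r s a + Gest π μ r c n (t + 1) s' τ - c t s a) + bbar π c t s)
          = (fun τ => (π t s a / μ t s a) * Gest π μ r c n (t + 1) s' τ +
              ((π t s a / μ t s a) * (r s a - c t s a) + bbar π c t s)) :=
        funext fun τ => by ring
      rw [e, Exp_affine p μ hp hμ, hmean' s']
      ring
    have mid : ∀ a : A, (∑ s', p s a s' *
        ((π t s a / μ t s a) *
            (r s a + (∑ a', π (t + 1) s' a' * qval p π r n (t + 1) s' a') - c t s a)
          + bbar π c t s))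
        = (π t s a / μ t s a) * (qval p π r (n + 1) t s a - c t s a) + bbar π c t s := by
      intro a
      have expand : ∀ s' : S, p s a s' *
          ((π t s a / μ t s a) *
              (r s a + (∑ a', π (t + 1) s' a' * qval p π r n (t + 1) s' a') - c t s a)
            + bbar π c t s)
          = (π t s a / μ t s a) *
              (p s a s' * (∑ a', π (t + 1) s' a' * qval p π r n (t + 1) s' a'))
            + p s a s' * ((π t s a / μ t s a) * (r s a - c t s a) + bbar π c t s) :=
        fun s' => by ring
      rw [Finset.sum_congr rfl fun s' _ => expand s', Finset.sum_add_distrib,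
        ← Finset.mul_sum, ← Finset.sum_mul, (hp s a).2, one_mul]
      simp only [qval]
      ring
    have h1 : ∀ a : A, (∑ s', p s a s' * Exp p μ n (t + 1) s'
        (fun τ => (π t s a / μ t s a) * (r s a + Gest π μ r c n (t + 1) s' τ - c t s a)
          + bbar π c t s))
        = (π t s a / μ t s a) * (qval p π r (n + 1) t s a - c t s a) + bbar π c t s := by
      intro a
      rw [Finset.sum_congr rfl fun s' _ => by rw [inner a s'], mid a]
    have step : ∀ a : A, μ t s a *
        ((π t s a / μ t s a) * (qval p π r (n + 1) t s a - c t s a) + bbar π c t s)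
        = π t s a * (qval p π r (n + 1) t s a - c t s a) + μ t s a * bbar π c t s := by
      intro a
      by_cases h : μ t s a = 0
      · have h2 := Hsupp 0 s a (Nat.zero_le _) (by simpa using h)
        simp only [Nat.add_zero, Nat.sub_zero] at h2
        rw [h, h2]; ring
      · field_simp
        try ring
    rw [Finset.sum_congr rfl fun a _ => by rw [h1 a], Finset.sum_congr rfl fun a _ => step a,
      Finset.sum_add_distrib, ← Finset.sum_mul, (hμ t s).2, one_mul]
    simp only [mul_sub, Finset.sum_sub_distrib]
    unfold bbar
    ring

private lemma Gest_sq_zero (p : S → A → S → ℝ) (π μ : ℕ → S → A → ℝ) (r : S → A → ℝ)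
    (c : ℕ → S → A → ℝ) (hμ : IsPolicy μ) (t : ℕ) (s : S)
    (Hsupp0 : ∀ a, μ t s a = 0 → π t s a * (r s a - c t s a) = 0) :
    Exp p μ 0 t s (fun τ => (Gest π μ r c 0 t s τ) ^ 2)
      = (∑ a, if μ t s a = 0 then 0 else (π t s a) ^ 2 / μ t s a * (r s a - c t s a) ^ 2)
        + (2 * bbar π c t s * ((∑ a, π t s a * r s a) - bbar π c t s)
          + (bbar π c t s) ^ 2) := by
  show ∑ a, μ t s a * ((π t s a / μ t s a) * (r s a - c t s a) + bbar π c t s) ^ 2 = _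
  have step : ∀ a : A, μ t s a * ((π t s a / μ t s a) * (r s a - c t s a) + bbar π c t s) ^ 2
      = (if μ t s a = 0 then 0 else (π t s a) ^ 2 / μ t s a * (r s a - c t s a) ^ 2)
        + (2 * bbar π c t s * (π t s a * (r s a - c t s a)) + μ t s a * (bbar π c t s) ^ 2) := by
    intro a
    by_cases h : μ t s a = 0
    · rw [if_pos h, h, Hsupp0 a h]; ring
    · rw [if_neg h]; field_simp; ring
  rw [Finset.sum_congr rfl fun a _ => step a, Finset.sum_add_distrib]
  congr 1
  rw [Finset.sum_add_distrib, ← Finset.mul_sum, ← Finset.sum_mul, (hμ t s).2, one_mul]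
  have hv : ∑ a, π t s a * (r s a - c t s a) = (∑ a, π t s a * r s a) - bbar π c t s := by
    unfold bbar; simp only [mul_sub, Finset.sum_sub_distrib]
  rw [hv]

private lemma Gest_sq_succ (p : S → A → S → ℝ) (π μ : ℕ → S → A → ℝ) (r : S → A → ℝ)
    (c : ℕ → S → A → ℝ) (hp : IsKernel p) (hμ : IsPolicy μ) (n t : ℕ) (s : S)
    (Hmean : ∀ s', Exp p μ n (t + 1) s' (Gest π μ r c n (t + 1) s')
      = ∑ a', π (t + 1) s' a' * qval p π r n (t + 1) s' a')
    (Hsupp0 : ∀ a, μ t s a = 0 → π t s a * (qval p π r (n + 1) t s a - c t s a) = 0) :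
    Exp p μ (n + 1) t s (fun τ => (Gest π μ r c (n + 1) t s τ) ^ 2)
      = (∑ a, if μ t s a = 0 then 0 else (π t s a) ^ 2 / μ t s a *
          ((qval p π r (n + 1) t s a - c t s a) ^ 2
            + ((∑ s', p s a s' * (∑ a', π (t + 1) s' a' * qval p π r n (t + 1) s' a') ^ 2)
               - (∑ s', p s a s' * ∑ a', π (t + 1) s' a' * qval p π r n (t + 1) s' a') ^ 2)
            + ∑ s', p s a s' * Var p μ n (t + 1) s' (Gest π μ r c n (t + 1) s')))
        + (2 * bbar π c t s * ((∑ a, π t s a * qval p π r (n + 1) t s a) - bbar π c t s)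
           + (bbar π c t s) ^ 2) := by
  show ∑ a, μ t s a * ∑ s', p s a s' * Exp p μ n (t + 1) s'
      (fun τ => ((π t s a / μ t s a) * (r s a + Gest π μ r c n (t + 1) s' τ - c t s a)
        + bbar π c t s) ^ 2) = _
  have inner : ∀ (a : A) (s' : S), Exp p μ n (t + 1) s'
      (fun τ => ((π t s a / μ t s a) * (r s a + Gest π μ r c n (t + 1) s' τ - c t s a)
        + bbar π c t s) ^ 2)
      = (π t s a / μ t s a) ^ 2 *
          (Var p μ n (t + 1) s' (Gest π μ r c n (t + 1) s')
            + (∑ a', π (t + 1) s' a' * qval p π r n (t + 1) s' a') ^ 2)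
        + ((2 * (π t s a / μ t s a) ^ 2 * (r s a - c t s a)
            + 2 * (π t s a / μ t s a) * bbar π c t s) *
              (∑ a', π (t + 1) s' a' * qval p π r n (t + 1) s' a')
          + ((π t s a / μ t s a) * (r s a - c t s a) + bbar π c t s) ^ 2) := by
    intro a s'
    have e : (fun τ => ((π t s a / μ t s a) *
          (r s a + Gest π μ r c n (t + 1) s' τ - c t s a) + bbar π c t s) ^ 2)
        = (fun τ => (π t s a / μ t s a) ^ 2 * (Gest π μ r c n (t + 1) s' τ) ^ 2
            + ((2 * (π t s a / μ t s a) ^ 2 * (r s a - c t s a)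
                + 2 * (π t s a / μ t s a) * bbar π c t s) * Gest π μ r c n (t + 1) s' τ
              + ((π t s a / μ t s a) * (r s a - c t s a) + bbar π c t s) ^ 2)) :=
      funext fun τ => by ring
    rw [e, Exp_add, Exp_smul, Exp_affine p μ hp hμ, Hmean s']
    have hsq : Exp p μ n (t + 1) s' (fun τ => (Gest π μ r c n (t + 1) s' τ) ^ 2)
        = Var p μ n (t + 1) s' (Gest π μ r c n (t + 1) s')
          + (∑ a', π (t + 1) s' a' * qval p π r n (t + 1) s' a') ^ 2 := by
      unfold Var; rw [Hmean s']; ring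
    rw [hsq]
  have mid : ∀ a : A, (∑ s', p s a s' *
      ((π t s a / μ t s a) ^ 2 *
          (Var p μ n (t + 1) s' (Gest π μ r c n (t + 1) s')
            + (∑ a', π (t + 1) s' a' * qval p π r n (t + 1) s' a') ^ 2)
        + ((2 * (π t s a / μ t s a) ^ 2 * (r s a - c t s a)
            + 2 * (π t s a / μ t s a) * bbar π c t s) *
              (∑ a', π (t + 1) s' a' * qval p π r n (t + 1) s' a')
          + ((π t s a / μ t s a) * (r s a - c t s a) + bbar π c t s) ^ 2)))
      = (π t s a / μ t s a) ^ 2 *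
          ((qval p π r (n + 1) t s a - c t s a) ^ 2
            + ((∑ s', p s a s' * (∑ a', π (t + 1) s' a' * qval p π r n (t + 1) s' a') ^ 2)
               - (∑ s', p s a s' * ∑ a', π (t + 1) s' a' * qval p π r n (t + 1) s' a') ^ 2)
            + ∑ s', p s a s' * Var p μ n (t + 1) s' (Gest π μ r c n (t + 1) s'))
        + 2 * (π t s a / μ t s a) * bbar π c t s * (qval p π r (n + 1) t s a - c t s a)
        + (bbar π c t s) ^ 2 := by
    intro a
    have expand : ∀ s' : S, p s a s' *
        ((π t s a / μ t s a) ^ 2 *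
            (Var p μ n (t + 1) s' (Gest π μ r c n (t + 1) s')
              + (∑ a', π (t + 1) s' a' * qval p π r n (t + 1) s' a') ^ 2)
          + ((2 * (π t s a / μ t s a) ^ 2 * (r s a - c t s a)
              + 2 * (π t s a / μ t s a) * bbar π c t s) *
                (∑ a', π (t + 1) s' a' * qval p π r n (t + 1) s' a')
            + ((π t s a / μ t s a) * (r s a - c t s a) + bbar π c t s) ^ 2))
        = (π t s a / μ t s a) ^ 2 *
            (p s a s' * Var p μ n (t + 1) s' (Gest π μ r c n (t + 1) s'))
          + ((π t s a / μ t s a) ^ 2 *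
              (p s a s' * (∑ a', π (t + 1) s' a' * qval p π r n (t + 1) s' a') ^ 2)
            + ((2 * (π t s a / μ t s a) ^ 2 * (r s a - c t s a)
                + 2 * (π t s a / μ t s a) * bbar π c t s) *
                  (p s a s' * ∑ a', π (t + 1) s' a' * qval p π r n (t + 1) s' a')
              + p s a s' * ((π t s a / μ t s a) * (r s a - c t s a) + bbar π c t s) ^ 2)) :=
      fun s' => by ring
    rw [Finset.sum_congr rfl fun s' _ => expand s', Finset.sum_add_distrib,
      Finset.sum_add_distrib, Finset.sum_add_distrib, ← Finset.mul_sum, ← Finset.mul_sum,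
      ← Finset.mul_sum, ← Finset.sum_mul, (hp s a).2, one_mul]
    simp only [qval]
    ring
  have step : ∀ a : A, μ t s a *
      ((π t s a / μ t s a) ^ 2 *
          ((qval p π r (n + 1) t s a - c t s a) ^ 2
            + ((∑ s', p s a s' * (∑ a', π (t + 1) s' a' * qval p π r n (t + 1) s' a') ^ 2)
               - (∑ s', p s a s' * ∑ a', π (t + 1) s' a' * qval p π r n (t + 1) s' a') ^ 2)
            + ∑ s', p s a s' * Var p μ n (t + 1) s' (Gest π μ r c n (t + 1) s'))
        + 2 * (π t s a / μ t s a) * bbar π c t s * (qval p π r (n + 1) t s a - c t s a)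
        + (bbar π c t s) ^ 2)
      = (if μ t s a = 0 then 0 else (π t s a) ^ 2 / μ t s a *
          ((qval p π r (n + 1) t s a - c t s a) ^ 2
            + ((∑ s', p s a s' * (∑ a', π (t + 1) s' a' * qval p π r n (t + 1) s' a') ^ 2)
               - (∑ s', p s a s' * ∑ a', π (t + 1) s' a' * qval p π r n (t + 1) s' a') ^ 2)
            + ∑ s', p s a s' * Var p μ n (t + 1) s' (Gest π μ r c n (t + 1) s')))
        + (2 * bbar π c t s * (π t s a * (qval p π r (n + 1) t s a - c t s a))
          + μ t s a * (bbar π c t s) ^ 2) := by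
    intro a
    by_cases h : μ t s a = 0
    · rw [if_pos h, h, Hsupp0 a h]; ring
    · rw [if_neg h]; field_simp; ring
  have h1 : ∀ a : A, (∑ s', p s a s' * Exp p μ n (t + 1) s'
      (fun τ => ((π t s a / μ t s a) * (r s a + Gest π μ r c n (t + 1) s' τ - c t s a)
        + bbar π c t s) ^ 2))
      = (π t s a / μ t s a) ^ 2 *
          ((qval p π r (n + 1) t s a - c t s a) ^ 2
            + ((∑ s', p s a s' * (∑ a', π (t + 1) s' a' * qval p π r n (t + 1) s' a') ^ 2)
               - (∑ s', p s a s' * ∑ a', π (t + 1) s' a' * qval p π r n (t + 1) s' a') ^ 2)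
            + ∑ s', p s a s' * Var p μ n (t + 1) s' (Gest π μ r c n (t + 1) s'))
        + 2 * (π t s a / μ t s a) * bbar π c t s * (qval p π r (n + 1) t s a - c t s a)
        + (bbar π c t s) ^ 2 := by
    intro a
    rw [Finset.sum_congr rfl fun s' _ => by rw [inner a s'], mid a]
  rw [Finset.sum_congr rfl fun a _ => by rw [h1 a]]
  rw [Finset.sum_congr rfl fun a _ => step a, Finset.sum_add_distrib]
  congr 1
  rw [Finset.sum_add_distrib, ← Finset.mul_sum, ← Finset.sum_mul, (hμ t s).2, one_mul]
  have hv : ∑ a, π t s a * (qval p π r (n + 1) t s a - c t s a)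
      = (∑ a, π t s a * qval p π r (n + 1) t s a) - bbar π c t s := by
    unfold bbar; simp only [mul_sub, Finset.sum_sub_distrib]
  rw [hv]

private lemma key_sum (π' u U μ' : A → ℝ) (hπ' : ∀ a, 0 ≤ π' a) (hu : ∀ a, 0 ≤ u a)
    (hU : ∀ a, U a = u a)
    (hμ' : ∀ a, μ' a = normPol (fun a' => π' a' * Real.sqrt (u a')) a) :
    (∑ a, if μ' a = 0 then 0 else (π' a) ^ 2 / μ' a * U a)
      = (∑ a, π' a * Real.sqrt (u a)) ^ 2 := by
  simp only [hU, hμ']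
  by_cases hz : (∑ a, π' a * Real.sqrt (u a)) = 0
  · have heach : ∀ a ∈ (Finset.univ : Finset A), π' a * Real.sqrt (u a) = 0 :=
      (Finset.sum_eq_zero_iff_of_nonneg
        (fun a _ => mul_nonneg (hπ' a) (Real.sqrt_nonneg _))).1 hz
    have hNP : ∀ a : A, normPol (fun a' => π' a' * Real.sqrt (u a')) a
        = ((Fintype.card A : ℝ))⁻¹ := by
      intro a; unfold normPol; rw [if_pos hz]
    have hcard : ((Fintype.card A : ℝ))⁻¹ ≠ 0 :=
      inv_ne_zero (by exact_mod_cast Fintype.card_ne_zero)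
    have hterm : ∀ a : A, (if normPol (fun a' => π' a' * Real.sqrt (u a')) a = 0 then (0 : ℝ)
        else (π' a) ^ 2 / normPol (fun a' => π' a' * Real.sqrt (u a')) a * u a) = 0 := by
      intro a
      rw [hNP a, if_neg hcard]
      rcases mul_eq_zero.1 (heach a (Finset.mem_univ a)) with h' | h'
      · rw [h']; ring
      · have hu0 : u a = 0 := le_antisymm (Real.sqrt_eq_zero'.1 h') (hu a)
        rw [hu0]; ring
    rw [Finset.sum_congr rfl fun a _ => hterm a, hz]
    simp
  · have hNP : ∀ a : A, normPol (fun a' => π' a' * Real.sqrt (u a')) a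
        = π' a * Real.sqrt (u a) / (∑ a', π' a' * Real.sqrt (u a')) := by
      intro a; unfold normPol; rw [if_neg hz]
    have hterm : ∀ a : A, (if normPol (fun a' => π' a' * Real.sqrt (u a')) a = 0 then (0 : ℝ)
        else (π' a) ^ 2 / normPol (fun a' => π' a' * Real.sqrt (u a')) a * u a)
        = (∑ a', π' a' * Real.sqrt (u a')) * (π' a * Real.sqrt (u a)) := by
      intro a
      rw [hNP a]
      by_cases hw : π' a * Real.sqrt (u a) = 0
      · rw [if_pos (by rw [hw]; simp), hw, mul_zero]
      · have hne : π' a * Real.sqrt (u a) / (∑ a', π' a' * Real.sqrt (u a')) ≠ 0 :=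
          div_ne_zero hw hz
        rw [if_neg hne]
        rcases mul_ne_zero_iff.1 hw with ⟨hπne, hsne⟩
        have hmss : u a = Real.sqrt (u a) * Real.sqrt (u a) := (Real.mul_self_sqrt (hu a)).symm
        rw [mul_comm ((π' a)^2 / _) (u a), hmss]
        field_simp
        rw [Real.sqrt_sq (Real.sqrt_nonneg _)]
    rw [Finset.sum_congr rfl fun a _ => hterm a, ← Finset.mul_sum]
    ring


private lemma uf_zero_eq (T : ℕ) (p : S → A → S → ℝ) (π : ℕ → S → A → ℝ) (r : S → A → ℝ)
    (c : ℕ → S → A → ℝ) (t : ℕ) (s : S) (a : A) (h : t + 1 = T) :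
    uf T p π r c t s a = (qf T p π r t s a - c t s a) ^ 2 := by
  unfold uf
  rw [show T - 1 - t = 0 by omega, uAux_zero]

private lemma uf_succ_eq (T : ℕ) (p : S → A → S → ℝ) (π : ℕ → S → A → ℝ) (r : S → A → ℝ)
    (c : ℕ → S → A → ℝ) (n t : ℕ) (h : n + t + 2 = T) (s : S) (a : A) :
    uf T p π r c t s a = (qf T p π r t s a - c t s a) ^ 2 + nuf T p π r t s a
      + ∑ s', p s a s' * Var p (mustar T p π r c) n (t + 1) s'
          (Gest π (mustar T p π r c) r c n (t + 1) s') := by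
  unfold uf
  rw [show T - 1 - t = n + 1 by omega, uAux_succ]
  congr 1
  refine Finset.sum_congr rfl fun s' _ => ?_
  congr 1
  refine VarGest_congr p π _ (mustar T p π r c) r c n (t + 1) (fun k hk => ?_) s'
  funext s₁ a₁
  show normPol (fun a₂ => π (t + 1 + k) s₁ a₂ *
      Real.sqrt (uAux T p π r c (n - (t + 1 + k - (t + 1))) (t + 1 + k) s₁ a₂)) a₁ = _
  unfold mustar uf
  rw [show n - (t + 1 + k - (t + 1)) = T - 1 - (t + 1 + k) by omega]

private lemma var_formula (T : ℕ) (p : S → A → S → ℝ) (π : ℕ → S → A → ℝ) (r : S → A → ℝ)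
    (c : ℕ → S → A → ℝ) (hp : IsKernel p) (hπ : IsPolicy π) (n t : ℕ) (s : S)
    (h : n + t + 1 = T) :
    VarG T p π (mustar T p π r c) r c t s
      = (∑ a, π t s a * Real.sqrt (uf T p π r c t s a)) ^ 2
        - ((∑ a, π t s a * qval p π r n t s a) - bbar π c t s) ^ 2 := by
  have hM : IsPolicy (mustar T p π r c) := mustar_isPolicy T p π r c hπ
  have hsupp : ∀ (n' t' : ℕ), n' + t' + 1 = T → ∀ k s' a', k ≤ n' →
      mustar T p π r c (t' + k) s' a' = 0 →
      π (t' + k) s' a' * (qval p π r (n' - k) (t' + k) s' a' - c (t' + k) s' a') = 0 := by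
    intro n' t' h' k s' a' hk hz
    have hq := mustar_supp T p π r c hp hπ (t' + k) s' a' hz
    have he : qf T p π r (t' + k) s' a' = qval p π r (n' - k) (t' + k) s' a' := by
      unfold qf; rw [show T - 1 - (t' + k) = n' - k by omega]
    rwa [he] at hq
  have hmean : ∀ (n' t' : ℕ), n' + t' + 1 = T → ∀ s',
      Exp p (mustar T p π r c) n' t' s' (Gest π (mustar T p π r c) r c n' t' s')
        = ∑ a, π t' s' a * qval p π r n' t' s' a :=
    fun n' t' h' => Gest_mean p π (mustar T p π r c) r c hp hM n' t'
      (fun k s' a' hk => hsupp n' t' h' k s' a' hk)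
  have hufnn : ∀ a, 0 ≤ uf T p π r c t s a := fun a => uf_nonneg T p π r c hp hπ t s a
  have hmustar : ∀ a, mustar T p π r c t s a
      = normPol (fun a' => π t s a' * Real.sqrt (uf T p π r c t s a')) a := fun a => rfl
  unfold VarG Var
  rw [show T - 1 - t = n by omega, hmean n t h s]
  cases n with
  | zero =>
    have hq0 : ∀ a : A, r s a = qf T p π r t s a := by
      intro a
      unfold qf
      rw [show T - 1 - t = 0 by omega]
      rfl
    rw [Gest_sq_zero p π (mustar T p π r c) r c hM t s (fun a hz => by
      have h2 := hsupp 0 t h 0 s a (le_refl 0) (by simpa using hz)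
      simpa [qval] using h2)]
    rw [key_sum (π t s) (uf T p π r c t s) (fun a => (r s a - c t s a) ^ 2)
      (mustar T p π r c t s) (hπ t s).1 hufnn
      (fun a => by
        show (r s a - c t s a) ^ 2 = uf T p π r c t s a
        rw [uf_zero_eq T p π r c t s a (by omega), hq0 a]) hmustar]
    have hr : ∀ a : A, qval p π r 0 t s a = r s a := fun a => rfl
    simp only [hr]
    ring
  | succ m =>
    have hqe : ∀ a : A, qval p π r (m + 1) t s a = qf T p π r t s a := by
      intro a
      unfold qf
      rw [show T - 1 - t = m + 1 by omega]
    rw [Gest_sq_succ p π (mustar T p π r c) r c hp hM m t s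
      (hmean m (t + 1) (by omega))
      (fun a hz => by
        have h2 := hsupp (m + 1) t h 0 s a (Nat.zero_le _) (by simpa using hz)
        simpa using h2)]
    have hU : ∀ a : A, ((qval p π r (m + 1) t s a - c t s a) ^ 2
        + ((∑ s', p s a s' * (∑ a', π (t + 1) s' a' * qval p π r m (t + 1) s' a') ^ 2)
           - (∑ s', p s a s' * ∑ a', π (t + 1) s' a' * qval p π r m (t + 1) s' a') ^ 2)
        + ∑ s', p s a s' * Var p (mustar T p π r c) m (t + 1) s'
            (Gest π (mustar T p π r c) r c m (t + 1) s'))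
        = uf T p π r c t s a := by
      intro a
      rw [uf_succ_eq T p π r c m t (by omega) s a]
      have hnuf : nuf T p π r t s a
          = (∑ s', p s a s' * (∑ a', π (t + 1) s' a' * qval p π r m (t + 1) s' a') ^ 2)
            - (∑ s', p s a s' * ∑ a', π (t + 1) s' a' * qval p π r m (t + 1) s' a') ^ 2 := by
        unfold nuf vf qf
        rw [if_pos (by omega : t + 2 ≤ T), show T - 1 - (t + 1) = m by omega]
      rw [hqe a, hnuf]
    rw [Finset.sum_congr rfl fun a _ => by rw [show (if mustar T p π r c t s a = 0 then (0:ℝ)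
        else (π t s a) ^ 2 / mustar T p π r c t s a *
          ((qval p π r (m + 1) t s a - c t s a) ^ 2
            + ((∑ s', p s a s' * (∑ a', π (t + 1) s' a' * qval p π r m (t + 1) s' a') ^ 2)
               - (∑ s', p s a s' * ∑ a', π (t + 1) s' a' * qval p π r m (t + 1) s' a') ^ 2)
            + ∑ s', p s a s' * Var p (mustar T p π r c) m (t + 1) s'
                (Gest π (mustar T p π r c) r c m (t + 1) s')))
        = (if mustar T p π r c t s a = 0 then (0:ℝ)
        else (π t s a) ^ 2 / mustar T p π r c t s a * uf T p π r c t s a) from by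
          rw [hU a]]]
    rw [key_sum (π t s) (uf T p π r c t s) (uf T p π r c t s)
      (mustar T p π r c t s) (hπ t s).1 hufnn (fun a => rfl) hmustar]
    ring


private lemma final_ineq2 (w d us ub : A → ℝ) (hw : ∀ a, 0 ≤ w a) (hus : ∀ a, 0 ≤ us a)
    (hkey : ∀ a, (d a) ^ 2 + us a ≤ ub a) :
    (∑ a, w a * Real.sqrt (us a)) ^ 2 ≤
      (∑ a, w a * Real.sqrt (ub a)) ^ 2 - (∑ a, w a * d a) ^ 2 := by
  have hfg : ∀ a, Real.sqrt ((w a * d a) ^ 2 + (w a) ^ 2 * us a)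
      = w a * Real.sqrt ((d a) ^ 2 + us a) := by
    intro a
    rw [show (w a * d a) ^ 2 + (w a) ^ 2 * us a = (w a) ^ 2 * ((d a) ^ 2 + us a) by ring,
      Real.sqrt_mul (sq_nonneg _), Real.sqrt_sq (hw a)]
  have hg2 : ∀ a, Real.sqrt ((w a) ^ 2 * us a) = w a * Real.sqrt (us a) := by
    intro a
    rw [Real.sqrt_mul (sq_nonneg _), Real.sqrt_sq (hw a)]
  have h1 := sum_sqrt_two (fun a => w a * d a) (fun a => (w a) ^ 2 * us a)
    (fun a => mul_nonneg (sq_nonneg _) (hus a))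
  simp only [hfg, hg2] at h1
  have h2 : (∑ a, w a * Real.sqrt ((d a) ^ 2 + us a)) ≤ ∑ a, w a * Real.sqrt (ub a) := by
    refine Finset.sum_le_sum fun a _ => ?_
    exact mul_le_mul_of_nonneg_left (Real.sqrt_le_sqrt (hkey a)) (hw a)
  have h3 : Real.sqrt ((∑ a, w a * d a) ^ 2 + (∑ a, w a * Real.sqrt (us a)) ^ 2) ≤
      ∑ a, w a * Real.sqrt (ub a) := le_trans h1 h2
  have h4 : (∑ a, w a * d a) ^ 2 + (∑ a, w a * Real.sqrt (us a)) ^ 2 ≤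
      (∑ a, w a * Real.sqrt (ub a)) ^ 2 := by
    have := pow_le_pow_left₀ (Real.sqrt_nonneg _) h3 2
    rwa [Real.sq_sqrt (by positivity)] at this
  linarith

private lemma main_ind (T : ℕ) (p : S → A → S → ℝ) (π : ℕ → S → A → ℝ) (r : S → A → ℝ)
    (b : ℕ → S → A → ℝ) (hp : IsKernel p) (hπ : IsPolicy π) :
    ∀ n t s, n + t + 1 = T →
      VarG T p π (mustar T p π r (bstar T p π r)) r (bstar T p π r) t s ≤
        VarG T p π (mustar T p π r b) r b t s := by
  intro n
  induction n with
  | zero =>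
    intro t s h
    rw [var_formula T p π r b hp hπ 0 t s h,
      var_formula T p π r (bstar T p π r) hp hπ 0 t s h]
    have hq : ∀ a : A, qval p π r 0 t s a = qf T p π r t s a := by
      intro a; unfold qf; rw [show T - 1 - t = 0 by omega]
    have hbb : bbar π (bstar T p π r) t s = ∑ a, π t s a * qval p π r 0 t s a := by
      unfold bbar
      refine Finset.sum_congr rfl fun a _ => ?_
      rw [hq a]
      rfl
    have hd : (∑ a, π t s a * qval p π r 0 t s a) - bbar π b t s
        = ∑ a, π t s a * (qval p π r 0 t s a - b t s a) := by
      unfold bbar; simp only [mul_sub, Finset.sum_sub_distrib]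
    rw [hbb, sub_self, hd, show ((0 : ℝ)) ^ 2 = 0 by norm_num, sub_zero]
    refine final_ineq2 (π t s) (fun a => qval p π r 0 t s a - b t s a)
      (uf T p π r (bstar T p π r) t s) (uf T p π r b t s) (hπ t s).1
      (fun a => uf_nonneg T p π r (bstar T p π r) hp hπ t s a) (fun a => ?_)
    show (qval p π r 0 t s a - b t s a) ^ 2 + uf T p π r (bstar T p π r) t s a
      ≤ uf T p π r b t s a
    rw [uf_zero_eq T p π r b t s a (by omega),
      uf_zero_eq T p π r (bstar T p π r) t s a (by omega), hq a]
    have hb0 : (qf T p π r t s a - bstar T p π r t s a) ^ 2 = 0 := by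
      show (qf T p π r t s a - qf T p π r t s a) ^ 2 = 0
      ring
    rw [hb0]
    linarith
  | succ m ih =>
    intro t s h
    rw [var_formula T p π r b hp hπ (m + 1) t s h,
      var_formula T p π r (bstar T p π r) hp hπ (m + 1) t s h]
    have hq : ∀ a : A, qval p π r (m + 1) t s a = qf T p π r t s a := by
      intro a; unfold qf; rw [show T - 1 - t = m + 1 by omega]
    have hbb : bbar π (bstar T p π r) t s = ∑ a, π t s a * qval p π r (m + 1) t s a := by
      unfold bbar
      refine Finset.sum_congr rfl fun a _ => ?_
      rw [hq a]
      rfl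
    have hd : (∑ a, π t s a * qval p π r (m + 1) t s a) - bbar π b t s
        = ∑ a, π t s a * (qval p π r (m + 1) t s a - b t s a) := by
      unfold bbar; simp only [mul_sub, Finset.sum_sub_distrib]
    rw [hbb, sub_self, hd, show ((0 : ℝ)) ^ 2 = 0 by norm_num, sub_zero]
    refine final_ineq2 (π t s) (fun a => qval p π r (m + 1) t s a - b t s a)
      (uf T p π r (bstar T p π r) t s) (uf T p π r b t s) (hπ t s).1
      (fun a => uf_nonneg T p π r (bstar T p π r) hp hπ t s a) (fun a => ?_)
    show (qval p π r (m + 1) t s a - b t s a) ^ 2 + uf T p π r (bstar T p π r) t s a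
      ≤ uf T p π r b t s a
    rw [uf_succ_eq T p π r b m t (by omega) s a,
      uf_succ_eq T p π r (bstar T p π r) m t (by omega) s a, hq a]
    have hb0 : (qf T p π r t s a - bstar T p π r t s a) ^ 2 = 0 := by
      show (qf T p π r t s a - qf T p π r t s a) ^ 2 = 0
      ring
    rw [hb0]
    have hvar : (∑ s', p s a s' * Var p (mustar T p π r (bstar T p π r)) m (t + 1) s'
          (Gest π (mustar T p π r (bstar T p π r)) r (bstar T p π r) m (t + 1) s'))
        ≤ ∑ s', p s a s' * Var p (mustar T p π r b) m (t + 1) s'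
          (Gest π (mustar T p π r b) r b m (t + 1) s') := by
      refine Finset.sum_le_sum fun s' _ => mul_le_mul_of_nonneg_left ?_ ((hp s a).1 s')
      have hihs := ih (t + 1) s' (by omega)
      unfold VarG at hihs
      rwa [show T - 1 - (t + 1) = m by omega] at hihs
    linarith

end Aux

/-- Optimal baseline: with `b*_t(s,a) = q_{π,t}(s,a)`, for every baseline `b`,
every time `t` and state `s`,
`Var(G^{b*}(τ^{μ^{*,b*}}_{t:T−1})|S_t=s) ≤ Var(G^b(τ^{μ^{*,b}}_{t:T−1})|S_t=s)`,
where `μ^{*,c}` is the optimal behavior policy tailored to the baseline `c`. -/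
theorem optimal_baseline {S A : Type} [Fintype S] [Fintype A] [Nonempty A]
    (T : ℕ) (hT : 1 ≤ T)
    (p : S → A → S → ℝ) (hp : IsKernel p)
    (r : S → A → ℝ)
    (π : ℕ → S → A → ℝ) (hπ : IsPolicy π)
    (b : ℕ → S → A → ℝ)
    (t : ℕ) (ht : t < T) (s : S) :
    VarG T p π (mustar T p π r (bstar T p π r)) r (bstar T p π r) t s ≤
      VarG T p π (mustar T p π r b) r b t s :=
  main_ind T p π r b hp hπ (T - 1 - t) t s (by omega)

end DOpt
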